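/- Suppose the observation map G and its surrogates G_N satisfy sup_{d∈D} ∫ ‖G(x;d)‖⁴_Γ dμ₀(x) ≤ C_G and sup_{d∈D} ∫ ‖G_N(x;d)‖⁴_Γ dμ₀(x) ≤ C_G for all N. Then for Gaussian noise N(0,Γ), the quantity K = ∫_{ℝ^p}∫_X log²(π(y|x;d)/π(y;d)) [π(y|x;d) + π_N(y|x;d)] dμ₀(x) dy is bounded by a constant depending only on p and C_G, uniformly in d and N. -/

import Mathlib

open MeasureTheory Matrix

/-- Density of the multivariate normal distribution `N(m, Γ)` on `ℝ^p`. -/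
noncomputable def gaussDensity (p : ℕ) (Γ : Matrix (Fin p) (Fin p) ℝ)
    (m : Fin p → ℝ) (y : Fin p → ℝ) : ℝ :=
  (Real.sqrt ((2 * Real.pi) ^ p * Γ.det))⁻¹ *
    Real.exp (-(1 / 2) * ((y - m) ⬝ᵥ Γ⁻¹.mulVec (y - m)))

section AuxHelpers

variable {p : ℕ} {Γ : Matrix (Fin p) (Fin p) ℝ}

lemma auxQ_cont (M : Matrix (Fin p) (Fin p) ℝ) :
    Continuous (fun v : Fin p → ℝ => v ⬝ᵥ M.mulVec v) := by
  simp only [dotProduct, mulVec]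
  exact continuous_finset_sum _ fun i _ =>
    (continuous_apply i).mul (continuous_finset_sum _ fun j _ =>
      continuous_const.mul (continuous_apply j))

lemma auxQ_nonneg (hΓ : Γ.PosDef) (v : Fin p → ℝ) : 0 ≤ v ⬝ᵥ Γ⁻¹.mulVec v := by
  have h := (hΓ.inv.posSemidef).re_dotProduct_nonneg v
  simpa using h

lemma auxQ_sub (hΓ : Γ.PosDef) (u v : Fin p → ℝ) :
    (u - v) ⬝ᵥ Γ⁻¹.mulVec (u - v) ≤ 2 * (u ⬝ᵥ Γ⁻¹.mulVec u) + 2 * (v ⬝ᵥ Γ⁻¹.mulVec v) := by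
  have h := auxQ_nonneg hΓ (u + v)
  simp only [Matrix.mulVec_add, Matrix.mulVec_sub, dotProduct_add,
    dotProduct_sub, add_dotProduct, sub_dotProduct] at h ⊢
  linarith

lemma aux_exp_integral_le {α : Type*} [MeasurableSpace α] (μ : Measure α)
    [IsProbabilityMeasure μ] {f : α → ℝ} (hf : Integrable f μ) (h0 : ∀ x, f x ≤ 0) :
    Real.exp (∫ x, f x ∂μ) ≤ ∫ x, Real.exp (f x) ∂μ := by
  set t := ∫ x, f x ∂μ with ht
  have hint : Integrable (fun x => Real.exp (f x)) μ := by
    refine Integrable.mono' (integrable_const 1)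
      (Real.continuous_exp.comp_aestronglyMeasurable hf.1)
      (Filter.Eventually.of_forall fun x => ?_)
    rw [Real.norm_eq_abs, abs_of_pos (Real.exp_pos _)]
    exact Real.exp_le_one_iff.2 (h0 x)
  have hlow : Integrable (fun x => Real.exp t * (1 + (f x - t))) μ :=
    (((integrable_const (1:ℝ)).add (hf.sub (integrable_const t))).const_mul _)
  have hpt : ∀ x, Real.exp t * (1 + (f x - t)) ≤ Real.exp (f x) := by
    intro x
    have h1 := Real.add_one_le_exp (f x - t)
    have h2 : Real.exp t * (1 + (f x - t)) ≤ Real.exp t * Real.exp (f x - t) := by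
      apply mul_le_mul_of_nonneg_left (by linarith) (Real.exp_pos t).le
    calc Real.exp t * (1 + (f x - t)) ≤ Real.exp t * Real.exp (f x - t) := h2
      _ = Real.exp (f x) := by rw [← Real.exp_add]; ring_nf
  calc Real.exp t = ∫ x, Real.exp t * (1 + (f x - t)) ∂μ := by
        have h2 : Integrable (fun x : α => f x - t) μ := hf.sub (integrable_const t)
        rw [integral_const_mul, integral_add (integrable_const (1:ℝ)) h2,
          integral_sub hf (integrable_const t)]
        simp [← ht]
    _ ≤ ∫ x, Real.exp (f x) ∂μ := integral_mono hlow hint hpt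

lemma aux_sq_integral_le {α : Type*} [MeasurableSpace α] (μ : Measure α)
    [IsProbabilityMeasure μ] {f : α → ℝ} (hf : Integrable f μ)
    (hf2 : Integrable (fun x => f x ^ 2) μ) :
    (∫ x, f x ∂μ) ^ 2 ≤ ∫ x, f x ^ 2 ∂μ := by
  set t := ∫ x, f x ∂μ with ht
  have h : 0 ≤ ∫ x, (f x - t) ^ 2 ∂μ := integral_nonneg fun x => sq_nonneg _
  have he : ∫ x, (f x - t) ^ 2 ∂μ = (∫ x, f x ^ 2 ∂μ) - t ^ 2 := by
    have hfe : (fun x => (f x - t) ^ 2) = fun x => f x ^ 2 - 2 * t * f x + t ^ 2 := by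
      funext x; ring
    have h3 : Integrable (fun x => 2 * t * f x) μ := hf.const_mul _
    have h4 : Integrable (fun x => f x ^ 2 - 2 * t * f x) μ := hf2.sub h3
    rw [hfe, integral_add h4 (integrable_const _),
      integral_sub hf2 h3, integral_const_mul]
    simp [← ht]; ring
  linarith

lemma aux_int1d (n : ℕ) :
    Integrable (fun t : ℝ => t ^ n * Real.exp (-(1/2) * t ^ 2)) := by
  have hb : (0:ℝ) < 1/4 := by norm_num
  refine Integrable.mono' ((integrable_exp_neg_mul_sq hb).const_mul
      (Real.exp (2 * (n:ℝ) ^ 2))) ?_ (Filter.Eventually.of_forall fun t => ?_)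
  · exact ((measurable_id.pow_const n).mul
      (Real.measurable_exp.comp ((measurable_id.pow_const 2).const_mul _))).aestronglyMeasurable
  · rw [Real.norm_eq_abs, abs_mul, abs_of_pos (Real.exp_pos _), abs_pow]
    have h1 : |t| ^ n ≤ Real.exp ((n:ℝ) * |t|) := by
      calc |t| ^ n ≤ (Real.exp |t|) ^ n := by
            apply pow_le_pow_left₀ (abs_nonneg _)
            linarith [Real.add_one_le_exp |t|]
        _ = Real.exp ((n:ℝ) * |t|) := by rw [← Real.exp_nat_mul]
    have h2 : (n:ℝ) * |t| ≤ 2 * (n:ℝ) ^ 2 + t ^ 2 / 8 := by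
      nlinarith [sq_nonneg (|t| - 4 * (n:ℝ)), sq_abs t]
    calc |t| ^ n * Real.exp (-(1/2) * t ^ 2)
        ≤ Real.exp (2 * (n:ℝ) ^ 2 + t ^ 2 / 8) * Real.exp (-(1/2) * t ^ 2) := by
          apply mul_le_mul_of_nonneg_right _ (Real.exp_pos _).le
          exact h1.trans (Real.exp_le_exp.2 h2)
      _ = Real.exp (2 * (n:ℝ) ^ 2 + t ^ 2 / 8 + -(1/2) * t ^ 2) := by rw [← Real.exp_add]
      _ ≤ Real.exp (2 * (n:ℝ) ^ 2 + -(1/4) * t ^ 2) := by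
          apply Real.exp_le_exp.2; nlinarith [sq_nonneg t]
      _ = Real.exp (2 * (n:ℝ) ^ 2) * Real.exp (-(1/4) * t ^ 2) := by rw [← Real.exp_add]

lemma aux_integrable_comp_mulVec {S : Matrix (Fin p) (Fin p) ℝ} (hdet : S.det ≠ 0)
    {f : (Fin p → ℝ) → ℝ} (hf : Measurable f)
    (h : Integrable (fun z => f (S.mulVec z)) volume) :
    Integrable f (volume : Measure (Fin p → ℝ)) := by
  have hT : Measurable (Matrix.toLin' S) := (LinearMap.continuous_on_pi _).measurable
  have hmap := Real.map_matrix_volume_pi_eq_smul_volume_pi hdet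
  have h1 : Integrable f (Measure.map (Matrix.toLin' S) volume) := by
    rw [integrable_map_measure hf.aestronglyMeasurable hT.aemeasurable]
    refine h.congr (Filter.Eventually.of_forall fun z => ?_)
    simp [Function.comp, Matrix.toLin'_apply]
  rw [hmap] at h1
  have hc0 : ENNReal.ofReal |S.det⁻¹| ≠ 0 := by
    simp only [ne_eq, ENNReal.ofReal_eq_zero, not_le, abs_pos]
    exact inv_ne_zero hdet
  exact (integrable_smul_measure hc0 ENNReal.ofReal_ne_top).1 h1

lemma aux_gauss_int (hΓ : Γ.PosDef) :
    Integrable (fun y => gaussDensity p Γ 0 y) (volume : Measure (Fin p → ℝ)) ∧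
    Integrable (fun y => (y ⬝ᵥ Γ⁻¹.mulVec y) ^ 2 * gaussDensity p Γ 0 y)
      (volume : Measure (Fin p → ℝ)) := by
  classical
  have hex : ∃ S : Matrix (Fin p) (Fin p) ℝ, S.IsHermitian ∧ S * S = Γ := by
    open scoped MatrixOrder in
    exact ⟨CFC.sqrt Γ, (CFC.sqrt_nonneg Γ).posSemidef.1, CFC.sqrt_mul_sqrt_self Γ hΓ.posSemidef.nonneg⟩
  obtain ⟨S, hherm, hSS⟩ := hex
  have hT : Sᵀ = S := by
    rw [← Matrix.conjTranspose_eq_transpose_of_trivial]; exact hherm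
  have hdet : S.det ≠ 0 := by
    intro h
    apply hΓ.det_pos.ne'
    rw [← hSS, det_mul, h, zero_mul]
  have hGinvS : Γ⁻¹ * S = S⁻¹ := by
    rw [← hSS, Matrix.mul_inv_rev, Matrix.mul_assoc,
      Matrix.nonsing_inv_mul S (isUnit_iff_ne_zero.2 hdet), Matrix.mul_one]
  have hone : S * (Γ⁻¹ * S) = 1 := by
    rw [hGinvS, Matrix.mul_nonsing_inv S (isUnit_iff_ne_zero.2 hdet)]
  have hvec : ∀ z : Fin p → ℝ, S.mulVec z = z ᵥ* S := by
    intro z; conv_lhs => rw [← hT]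
    rw [mulVec_transpose]
  have hkey : ∀ z : Fin p → ℝ, (S.mulVec z) ⬝ᵥ Γ⁻¹.mulVec (S.mulVec z) = z ⬝ᵥ z := by
    intro z
    rw [mulVec_mulVec, hvec, dotProduct_mulVec, vecMul_vecMul, hone, vecMul_one]
  have hQmeas : Measurable (fun v : Fin p → ℝ => v ⬝ᵥ Γ⁻¹.mulVec v) :=
    (auxQ_cont Γ⁻¹).measurable
  have hgmeas : Measurable (fun y => gaussDensity p Γ 0 y) := by
    unfold gaussDensity
    exact (Real.measurable_exp.comp
      ((hQmeas.comp (measurable_id.sub measurable_const)).const_mul _)).const_mul _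
  have hexp_prod : ∀ z : Fin p → ℝ,
      Real.exp (-(1/2) * (z ⬝ᵥ z)) = ∏ i, Real.exp (-(1/2) * (z i) ^ 2) := by
    intro z
    rw [← Real.exp_sum]
    congr 1
    rw [dotProduct, Finset.mul_sum]
    exact Finset.sum_congr rfl fun i _ => by ring
  have hcomp : ∀ z : Fin p → ℝ,
      gaussDensity p Γ 0 (S.mulVec z)
        = (Real.sqrt ((2 * Real.pi) ^ p * Γ.det))⁻¹ * ∏ i, Real.exp (-(1/2) * (z i) ^ 2) := by
    intro z
    unfold gaussDensity
    rw [sub_zero, hkey, ← hexp_prod]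
  constructor
  · apply aux_integrable_comp_mulVec hdet hgmeas
    have hi : Integrable (fun z : Fin p → ℝ => ∏ i, Real.exp (-(1/2) * (z i) ^ 2)) volume := by
      apply Integrable.fintype_prod (f := fun (_ : Fin p) (t : ℝ) => Real.exp (-(1/2) * t ^ 2))
      intro i
      simpa using integrable_exp_neg_mul_sq (by norm_num : (0:ℝ) < 1/2)
    exact (hi.const_mul _).congr (Filter.Eventually.of_forall fun z => (hcomp z).symm)
  · have hmeas2 : Measurable (fun y : Fin p → ℝ =>
        (y ⬝ᵥ Γ⁻¹.mulVec y) ^ 2 * gaussDensity p Γ 0 y) :=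
      (hQmeas.pow_const 2).mul hgmeas
    apply aux_integrable_comp_mulVec hdet hmeas2
    have hsum : ∀ z : Fin p → ℝ,
        (z ⬝ᵥ z) ^ 2 * ∏ i, Real.exp (-(1/2) * (z i) ^ 2)
          = ∑ i, ∑ j, ∏ k, ((if i = k then (z k) ^ 2 else 1) *
              ((if j = k then (z k) ^ 2 else 1) * Real.exp (-(1/2) * (z k) ^ 2))) := by
      intro z
      have h1 : ∀ (i : Fin p), (∏ k, (if i = k then (z k) ^ 2 else 1)) = (z i) ^ 2 := by
        intro i; simp [Finset.prod_ite_eq]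
      have h2 : ∀ i j : Fin p, ∏ k, ((if i = k then (z k) ^ 2 else 1) *
              ((if j = k then (z k) ^ 2 else 1) * Real.exp (-(1/2) * (z k) ^ 2)))
            = (z i) ^ 2 * ((z j) ^ 2 * ∏ k, Real.exp (-(1/2) * (z k) ^ 2)) := by
        intro i j
        rw [Finset.prod_mul_distrib, Finset.prod_mul_distrib, h1 i, h1 j]
      simp only [h2]
      have hdz : z ⬝ᵥ z = ∑ i, (z i) ^ 2 := by
        rw [dotProduct]; exact Finset.sum_congr rfl fun i _ => by ring
      rw [hdz, sq, Finset.sum_mul_sum]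
      rw [Finset.sum_mul]
      refine Finset.sum_congr rfl fun i _ => ?_
      rw [Finset.sum_mul]
      exact Finset.sum_congr rfl fun j _ => by ring
    have hint : Integrable (fun z : Fin p → ℝ =>
        ∑ i, ∑ j, ∏ k, ((if i = k then (z k) ^ 2 else 1) *
            ((if j = k then (z k) ^ 2 else 1) * Real.exp (-(1/2) * (z k) ^ 2)))) volume := by
      apply integrable_finset_sum
      intro i _
      apply integrable_finset_sum
      intro j _
      apply Integrable.fintype_prod (f := fun (k : Fin p) (t : ℝ) =>
        (if i = k then t ^ 2 else 1) * ((if j = k then t ^ 2 else 1)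
          * Real.exp (-(1/2) * t ^ 2)))
      intro k
      by_cases h1 : i = k <;> by_cases h2 : j = k <;>
        simp only [h1, h2, if_true, if_false, one_mul, mul_one, if_neg, if_pos]
      · exact (aux_int1d 4).congr (Filter.Eventually.of_forall fun t => by ring)
      · exact (aux_int1d 2).congr (Filter.Eventually.of_forall fun t => by ring)
      · exact (aux_int1d 2).congr (Filter.Eventually.of_forall fun t => by ring)
      · exact (aux_int1d 0).congr (Filter.Eventually.of_forall fun t => by simp)
    refine ((hint.const_mul ((Real.sqrt ((2 * Real.pi) ^ p * Γ.det))⁻¹)).congr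
      (Filter.Eventually.of_forall fun z => ?_))
    show _ = (S.mulVec z ⬝ᵥ Γ⁻¹.mulVec (S.mulVec z)) ^ 2 * gaussDensity p Γ 0 (S.mulVec z)
    rw [hkey z, hcomp z,
      show (z ⬝ᵥ z) ^ 2 * ((Real.sqrt ((2 * Real.pi) ^ p * Γ.det))⁻¹
          * ∏ i, Real.exp (-(1/2) * (z i) ^ 2))
        = (Real.sqrt ((2 * Real.pi) ^ p * Γ.det))⁻¹
          * ((z ⬝ᵥ z) ^ 2 * ∏ i, Real.exp (-(1/2) * (z i) ^ 2)) from by ring,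
      hsum z]

end AuxHelpers

lemma aux_arith1 {L q a A2 QA CG : ℝ} (hLsq : L ^ 2 ≤ ((1 / 2) * q + -a) ^ 2)
    (h8 : a ^ 2 ≤ (1 / 4) * A2) (hA2b : A2 ≤ 12 * q ^ 2 + 48 * QA + 48 * CG) :
    L ^ 2 ≤ 7 * q ^ 2 + (24 * QA + 24 * CG) := by
  nlinarith [sq_nonneg ((1 / 2) * q + a), sq_nonneg q]

lemma aux_arith2 {L q qn QA QB CG : ℝ} (hB1 : L ^ 2 ≤ 7 * q ^ 2 + (24 * QA + 24 * CG))
    (hq2 : q ^ 2 ≤ 12 * qn ^ 2 + 48 * QB + 48 * QA) :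
    L ^ 2 ≤ 84 * qn ^ 2 + (336 * QB + 360 * QA + 24 * CG) := by linarith

set_option maxHeartbeats 1000000

/-- if the observation map `G` and its surrogates `G_N` have `Γ`-weighted fourth
moments bounded by `C_G` uniformly in `d` (and `N`), then for Gaussian likelihoods with noise
covariance `Γ` the quantity
`K = ∫∫ log²(π(y|x;d)/π(y;d)) [π(y|x;d) + π_N(y|x;d)] dμ₀ dy`
is bounded by a constant, uniformly in `d` and `N`. -/
theorem K_uniformly_bounded {X : Type*} [MeasurableSpace X]
    (μ₀ : Measure X) [IsProbabilityMeasure μ₀]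
    (p : ℕ) (Γ : Matrix (Fin p) (Fin p) ℝ) (hΓ : Γ.PosDef)
    {D : Type*} (G : D → X → Fin p → ℝ) (GN : ℕ → D → X → Fin p → ℝ)
    (hGmeas : ∀ d, Measurable (G d)) (hGNmeas : ∀ N d, Measurable (GN N d))
    (CG : ℝ)
    (hG4int : ∀ d, Integrable (fun x => ((G d x) ⬝ᵥ Γ⁻¹.mulVec (G d x)) ^ 2) μ₀)
    (hGN4int : ∀ N d, Integrable (fun x => ((GN N d x) ⬝ᵥ Γ⁻¹.mulVec (GN N d x)) ^ 2) μ₀)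
    (hG4 : ∀ d, ∫ x, ((G d x) ⬝ᵥ Γ⁻¹.mulVec (G d x)) ^ 2 ∂μ₀ ≤ CG)
    (hGN4 : ∀ N d, ∫ x, ((GN N d x) ⬝ᵥ Γ⁻¹.mulVec (GN N d x)) ^ 2 ∂μ₀ ≤ CG) :
    ∃ C : ℝ, ∀ (d : D) (N : ℕ),
      (∫ y, (∫ x,
          (Real.log (gaussDensity p Γ (G d x) y / ∫ x', gaussDensity p Γ (G d x') y ∂μ₀)) ^ 2
            * (gaussDensity p Γ (G d x) y + gaussDensity p Γ (GN N d x) y) ∂μ₀))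
        ≤ C := by
  classical
  rcases isEmpty_or_nonempty D with hD | ⟨⟨d₀⟩⟩
  · exact ⟨0, fun d => (hD.false d).elim⟩
  have hCG0 : 0 ≤ CG :=
    le_trans (integral_nonneg fun x => sq_nonneg _) (hG4 d₀)
  -- basic notation
  set Z : ℝ := Real.sqrt ((2 * Real.pi) ^ p * Γ.det) with hZdef
  have hZ : 0 < Z := by
    apply Real.sqrt_pos.2
    have := hΓ.det_pos
    positivity
  set Q : (Fin p → ℝ) → ℝ := fun v => v ⬝ᵥ Γ⁻¹.mulVec v with hQdef
  have hQnn : ∀ v, 0 ≤ Q v := fun v => auxQ_nonneg hΓ v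
  have hQsub : ∀ u v, Q (u - v) ≤ 2 * Q u + 2 * Q v := fun u v => auxQ_sub hΓ u v
  have hQsub2 : ∀ u v, Q (u - v) ^ 2 ≤ 8 * Q u ^ 2 + 8 * Q v ^ 2 := by
    intro u v
    have h := hQsub u v
    have h2 : Q (u - v) * Q (u - v) ≤ (2 * Q u + 2 * Q v) * (2 * Q u + 2 * Q v) :=
      mul_le_mul h h (hQnn _) (by nlinarith [hQnn u, hQnn v])
    nlinarith [sq_nonneg (Q u - Q v)]
  have hQcont : Continuous Q := auxQ_cont Γ⁻¹
  have hgdef : ∀ m y, gaussDensity p Γ m y = Z⁻¹ * Real.exp (-(1 / 2) * Q (y - m)) :=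
    fun m y => rfl
  have hgpos : ∀ m y, 0 < gaussDensity p Γ m y := fun m y => by
    rw [hgdef]; positivity
  have hgle : ∀ m y, gaussDensity p Γ m y ≤ Z⁻¹ := fun m y => by
    rw [hgdef]
    calc Z⁻¹ * Real.exp (-(1 / 2) * Q (y - m)) ≤ Z⁻¹ * 1 := by
          apply mul_le_mul_of_nonneg_left _ (by positivity)
          apply Real.exp_le_one_iff.2
          nlinarith [hQnn (y - m)]
      _ = Z⁻¹ := mul_one _
  -- Gaussian integrals
  obtain ⟨hint0, hint2⟩ := aux_gauss_int hΓ
  set I : ℝ := ∫ y, gaussDensity p Γ 0 y with hIdef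
  set c : ℝ := ∫ y, Q y ^ 2 * gaussDensity p Γ 0 y with hcdef
  have hI0 : 0 ≤ I := integral_nonneg fun y => (hgpos _ _).le
  have hc0 : 0 ≤ c := integral_nonneg fun y => mul_nonneg (sq_nonneg _) (hgpos _ _).le
  have htrans : ∀ m : Fin p → ℝ,
      (fun y => gaussDensity p Γ m y) = fun y => gaussDensity p Γ 0 (y - m) := by
    intro m; funext y; simp [gaussDensity]
  have htrans2 : ∀ m : Fin p → ℝ,
      (fun y => Q (y - m) ^ 2 * gaussDensity p Γ m y)
        = fun y => Q (y - m - 0) ^ 2 * gaussDensity p Γ 0 (y - m) := by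
    intro m; funext y; simp [gaussDensity]
  have hint0m : ∀ m, Integrable (fun y => gaussDensity p Γ m y)
      (volume : Measure (Fin p → ℝ)) := by
    intro m; rw [htrans m]
    exact Integrable.comp_sub_right hint0 m
  have hIm : ∀ m, ∫ y, gaussDensity p Γ m y = I := by
    intro m; rw [htrans m]
    exact integral_sub_right_eq_self (gaussDensity p Γ 0) m
  have hint2m : ∀ m, Integrable (fun y => Q (y - m) ^ 2 * gaussDensity p Γ m y)
      (volume : Measure (Fin p → ℝ)) := by
    intro m; rw [htrans2 m]
    exact Integrable.comp_sub_right (f := fun u => Q (u - 0) ^ 2 * gaussDensity p Γ 0 u)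
      (by simpa using hint2) m
  have hcm : ∀ m, ∫ y, Q (y - m) ^ 2 * gaussDensity p Γ m y = c := by
    intro m; rw [htrans2 m]
    rw [integral_sub_right_eq_self (fun u => Q (u - 0) ^ 2 * gaussDensity p Γ 0 u) m]
    simp [hcdef]
  -- the uniform constant
  refine ⟨91 * c + 768 * I * CG, fun d N => ?_⟩
  set A : X → Fin p → ℝ := G d with hAdef
  set B : X → Fin p → ℝ := GN N d with hBdef
  have hAm : Measurable A := hGmeas d
  have hBm : Measurable B := hGNmeas N d
  have hA4int : Integrable (fun x => Q (A x) ^ 2) μ₀ := hG4int d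
  have hB4int : Integrable (fun x => Q (B x) ^ 2) μ₀ := hGN4int N d
  have hA4 : ∫ x, Q (A x) ^ 2 ∂μ₀ ≤ CG := hG4 d
  have hB4 : ∫ x, Q (B x) ^ 2 ∂μ₀ ≤ CG := hGN4 N d
  -- dominating function
  set g : X → (Fin p → ℝ) → ℝ := fun x y =>
    (7 * Q (y - A x) ^ 2 + (24 * Q (A x) ^ 2 + 24 * CG)) * gaussDensity p Γ (A x) y
      + (84 * Q (y - B x) ^ 2 + (336 * Q (B x) ^ 2 + 360 * Q (A x) ^ 2 + 24 * CG))
          * gaussDensity p Γ (B x) y with hgdef2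
  have hgnn : ∀ x y, 0 ≤ g x y := by
    intro x y
    apply add_nonneg <;> apply mul_nonneg _ (hgpos _ _).le <;>
      nlinarith [sq_nonneg (Q (y - A x)), sq_nonneg (Q (A x)), sq_nonneg (Q (y - B x)),
        sq_nonneg (Q (B x))]
  -- Step C : integral over y for fixed x
  have hkeyC : ∀ (m : Fin p → ℝ) (a b : ℝ),
      Integrable (fun y => (a * Q (y - m) ^ 2 + b) * gaussDensity p Γ m y)
          (volume : Measure (Fin p → ℝ)) ∧
        ∫ y, (a * Q (y - m) ^ 2 + b) * gaussDensity p Γ m y = a * c + b * I := by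
    intro m a b
    have h1 : Integrable (fun y => a * (Q (y - m) ^ 2 * gaussDensity p Γ m y)
        + b * gaussDensity p Γ m y) (volume : Measure (Fin p → ℝ)) :=
      ((hint2m m).const_mul a).add ((hint0m m).const_mul b)
    have he : (fun y => (a * Q (y - m) ^ 2 + b) * gaussDensity p Γ m y)
        = fun y => a * (Q (y - m) ^ 2 * gaussDensity p Γ m y) + b * gaussDensity p Γ m y := by
      funext y; ring
    constructor
    · rw [he]; exact h1
    · rw [he, integral_add ((hint2m m).const_mul a) ((hint0m m).const_mul b),
        integral_const_mul, integral_const_mul, hcm m, hIm m]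
  have hyint : ∀ x, Integrable (fun y => g x y) (volume : Measure (Fin p → ℝ)) := by
    intro x
    exact (hkeyC (A x) 7 _).1.add (hkeyC (B x) 84 _).1
  have hyval : ∀ x, ∫ y, g x y
      = (7 * c + (24 * Q (A x) ^ 2 + 24 * CG) * I)
        + (84 * c + (336 * Q (B x) ^ 2 + 360 * Q (A x) ^ 2 + 24 * CG) * I) := by
    intro x
    rw [show (fun y => g x y) = fun y =>
        (7 * Q (y - A x) ^ 2 + (24 * Q (A x) ^ 2 + 24 * CG)) * gaussDensity p Γ (A x) y
        + (84 * Q (y - B x) ^ 2 + (336 * Q (B x) ^ 2 + 360 * Q (A x) ^ 2 + 24 * CG))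
            * gaussDensity p Γ (B x) y from rfl,
      integral_add (hkeyC (A x) 7 _).1 (hkeyC (B x) 84 _).1,
      (hkeyC (A x) 7 _).2, (hkeyC (B x) 84 _).2]
  -- Step B : integrability over x for fixed y
  have hgaussAmeas : ∀ y, Measurable (fun x => gaussDensity p Γ (A x) y) := by
    intro y
    have : Measurable (fun x => Q (y - A x)) :=
      hQcont.measurable.comp (measurable_const.sub hAm)
    simp only [hgdef]
    exact (Real.measurable_exp.comp (this.const_mul _)).const_mul _
  have hgaussBmeas : ∀ y, Measurable (fun x => gaussDensity p Γ (B x) y) := by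
    intro y
    have : Measurable (fun x => Q (y - B x)) :=
      hQcont.measurable.comp (measurable_const.sub hBm)
    simp only [hgdef]
    exact (Real.measurable_exp.comp (this.const_mul _)).const_mul _
  have hxint : ∀ y, Integrable (fun x => g x y) μ₀ := by
    intro y
    have hmeas : Measurable (fun x => g x y) := by
      have h1 : Measurable (fun x => Q (y - A x)) :=
        hQcont.measurable.comp (measurable_const.sub hAm)
      have h2 : Measurable (fun x => Q (y - B x)) :=
        hQcont.measurable.comp (measurable_const.sub hBm)
      have h3 : Measurable (fun x => Q (A x)) := hQcont.measurable.comp hAm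
      have h4 : Measurable (fun x => Q (B x)) := hQcont.measurable.comp hBm
      exact ((((h1.pow_const 2).const_mul 7).add
            (((h3.pow_const 2).const_mul 24).add_const _)).mul (hgaussAmeas y)).add
        ((((h2.pow_const 2).const_mul 84).add
            ((((h4.pow_const 2).const_mul 336).add ((h3.pow_const 2).const_mul 360)).add_const
              _)).mul (hgaussBmeas y))
    refine Integrable.mono' (g := fun x =>
        ((56 * Q y ^ 2 + 24 * CG) + 80 * Q (A x) ^ 2) * Z⁻¹
          + ((672 * Q y ^ 2 + 24 * CG) + (1008 * Q (B x) ^ 2 + 360 * Q (A x) ^ 2)) * Z⁻¹)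
      ?_ hmeas.aestronglyMeasurable (Filter.Eventually.of_forall fun x => ?_)
    · exact (((integrable_const _).add (hA4int.const_mul 80)).mul_const _).add
        (((integrable_const _).add
          ((hB4int.const_mul 1008).add (hA4int.const_mul 360))).mul_const _)
    · rw [Real.norm_eq_abs, abs_of_nonneg (hgnn x y)]
      have hc1 : Q (y - A x) ^ 2 ≤ 8 * Q y ^ 2 + 8 * Q (A x) ^ 2 := hQsub2 y (A x)
      have hc2 : Q (y - B x) ^ 2 ≤ 8 * Q y ^ 2 + 8 * Q (B x) ^ 2 := hQsub2 y (B x)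
      have hb1 : (7 * Q (y - A x) ^ 2 + (24 * Q (A x) ^ 2 + 24 * CG))
          * gaussDensity p Γ (A x) y ≤ ((56 * Q y ^ 2 + 24 * CG) + 80 * Q (A x) ^ 2) * Z⁻¹ := by
        apply mul_le_mul (by linarith) (hgle _ _) (hgpos _ _).le
        linarith [sq_nonneg (Q y), sq_nonneg (Q (A x))]
      have hb2 : (84 * Q (y - B x) ^ 2 + (336 * Q (B x) ^ 2 + 360 * Q (A x) ^ 2 + 24 * CG))
          * gaussDensity p Γ (B x) y
            ≤ ((672 * Q y ^ 2 + 24 * CG) + (1008 * Q (B x) ^ 2 + 360 * Q (A x) ^ 2)) * Z⁻¹ := by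
        apply mul_le_mul (by linarith) (hgle _ _) (hgpos _ _).le
        linarith [sq_nonneg (Q y), sq_nonneg (Q (B x)), sq_nonneg (Q (A x))]
      exact add_le_add hb1 hb2
  -- Step D : integrability on the product
  have hprodmeas : AEStronglyMeasurable (fun z : X × (Fin p → ℝ) => g z.1 z.2)
      (μ₀.prod volume) := by
    have h1 : Measurable (fun z : X × (Fin p → ℝ) => Q (z.2 - A z.1)) :=
      hQcont.measurable.comp (measurable_snd.sub (hAm.comp measurable_fst))
    have h2 : Measurable (fun z : X × (Fin p → ℝ) => Q (z.2 - B z.1)) :=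
      hQcont.measurable.comp (measurable_snd.sub (hBm.comp measurable_fst))
    have h3 : Measurable (fun z : X × (Fin p → ℝ) => Q (A z.1)) :=
      hQcont.measurable.comp (hAm.comp measurable_fst)
    have h4 : Measurable (fun z : X × (Fin p → ℝ) => Q (B z.1)) :=
      hQcont.measurable.comp (hBm.comp measurable_fst)
    have hg1 : Measurable (fun z : X × (Fin p → ℝ) => gaussDensity p Γ (A z.1) z.2) := by
      simp only [hgdef]
      exact (Real.measurable_exp.comp (h1.const_mul _)).const_mul _
    have hg2 : Measurable (fun z : X × (Fin p → ℝ) => gaussDensity p Γ (B z.1) z.2) := by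
      simp only [hgdef]
      exact (Real.measurable_exp.comp (h2.const_mul _)).const_mul _
    exact (((((h1.pow_const 2).const_mul 7).add
          (((h3.pow_const 2).const_mul 24).add_const _)).mul hg1).add
      ((((h2.pow_const 2).const_mul 84).add
          ((((h4.pow_const 2).const_mul 336).add ((h3.pow_const 2).const_mul 360)).add_const
            _)).mul hg2)).aestronglyMeasurable
  have hprod : Integrable (Function.uncurry g) (μ₀.prod volume) := by
    refine (integrable_prod_iff hprodmeas).2 ⟨Filter.Eventually.of_forall fun x => hyint x, ?_⟩
    have he : (fun x => ∫ y, ‖g x y‖) = fun x =>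
        (7 * c + (24 * Q (A x) ^ 2 + 24 * CG) * I)
          + (84 * c + (336 * Q (B x) ^ 2 + 360 * Q (A x) ^ 2 + 24 * CG) * I) := by
      funext x
      rw [show (fun y => ‖g x y‖) = fun y => g x y from
        funext fun y => by rw [Real.norm_eq_abs, abs_of_nonneg (hgnn x y)]]
      exact hyval x
    rw [he]
    refine Integrable.add ?_ ?_
    · exact (integrable_const _).add
        (((hA4int.const_mul 24).add (integrable_const _)).mul_const _)
    · exact (integrable_const _).add
        ((((hB4int.const_mul 336).add (hA4int.const_mul 360)).add
          (integrable_const _)).mul_const _)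
  -- Step A : pointwise bound
  have hptw : ∀ x y,
      (Real.log (gaussDensity p Γ (A x) y / ∫ x', gaussDensity p Γ (A x') y ∂μ₀)) ^ 2
          * (gaussDensity p Γ (A x) y + gaussDensity p Γ (B x) y) ≤ g x y := by
    intro x y
    set q := Q (y - A x) with hq
    set qn := Q (y - B x) with hqn
    have hmA : Measurable (fun x' => Q (y - A x')) :=
      hQcont.measurable.comp (measurable_const.sub hAm)
    have h_f1int : Integrable (fun x' => Q (y - A x')) μ₀ := by
      refine Integrable.mono' ((hA4int.const_mul 2).add (integrable_const (2 * Q y + 2)))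
        hmA.aestronglyMeasurable (Filter.Eventually.of_forall fun x' => ?_)
      rw [Real.norm_eq_abs, abs_of_nonneg (hQnn _)]
      simp only [Pi.add_apply]
      have h1 := hQsub y (A x')
      have h2 : Q (A x') ≤ 1 + Q (A x') ^ 2 := by nlinarith [hQnn (A x'), sq_nonneg (Q (A x') - 1)]
      linarith
    have h_f2int : Integrable (fun x' => Q (y - A x') ^ 2) μ₀ := by
      refine Integrable.mono' ((hA4int.const_mul 8).add (integrable_const (8 * Q y ^ 2)))
        (hmA.pow_const 2).aestronglyMeasurable (Filter.Eventually.of_forall fun x' => ?_)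
      rw [Real.norm_eq_abs, abs_of_nonneg (sq_nonneg _)]
      simp only [Pi.add_apply]
      linarith [hQsub2 y (A x')]
    have h_gint : Integrable (fun x' => gaussDensity p Γ (A x') y) μ₀ := by
      refine Integrable.mono' (integrable_const Z⁻¹) (hgaussAmeas y).aestronglyMeasurable
        (Filter.Eventually.of_forall fun x' => ?_)
      rw [Real.norm_eq_abs, abs_of_pos (hgpos _ _)]
      exact hgle _ _
    set piy := ∫ x', gaussDensity p Γ (A x') y ∂μ₀ with hpiy
    have hpiyle : piy ≤ Z⁻¹ := by
      calc piy ≤ ∫ _x', Z⁻¹ ∂μ₀ := integral_mono h_gint (integrable_const _) fun x' => hgle _ _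
        _ = Z⁻¹ := by simp
    set a := ∫ x', (-(1 / 2) * Q (y - A x')) ∂μ₀ with ha
    have hale : a ≤ 0 := by
      apply integral_nonpos
      intro x'
      simp only [Pi.zero_apply]
      nlinarith [hQnn (y - A x')]
    have hjen : Z⁻¹ * Real.exp a ≤ piy := by
      have hexple := aux_exp_integral_le μ₀ (f := fun x' => -(1 / 2) * Q (y - A x'))
        (h_f1int.const_mul _) (fun x' => by nlinarith [hQnn (y - A x')])
      calc Z⁻¹ * Real.exp a
          ≤ Z⁻¹ * ∫ x', Real.exp (-(1 / 2) * Q (y - A x')) ∂μ₀ := by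
            apply mul_le_mul_of_nonneg_left _ (by positivity)
            exact hexple
        _ = piy := by
            rw [← integral_const_mul, hpiy]
            exact integral_congr_ae (Filter.Eventually.of_forall fun x' =>
              (hgdef (A x') y).symm)
    have hpiypos : 0 < piy := lt_of_lt_of_le (by positivity) hjen
    set L := Real.log (gaussDensity p Γ (A x) y / piy) with hL
    have hLeq : L = Real.log (gaussDensity p Γ (A x) y) - Real.log piy :=
      Real.log_div (hgpos _ _).ne' hpiypos.ne'
    have hlogx : Real.log (gaussDensity p Γ (A x) y) = Real.log Z⁻¹ + (-(1 / 2) * q) := by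
      rw [hgdef (A x) y, Real.log_mul (by positivity) (Real.exp_ne_zero _), Real.log_exp]
    have hup : L ≤ -a := by
      have h1 : Real.log Z⁻¹ + a ≤ Real.log piy := by
        have h := Real.log_le_log (by positivity) hjen
        rwa [Real.log_mul (by positivity) (Real.exp_ne_zero _), Real.log_exp] at h
      have h2 : Real.log (gaussDensity p Γ (A x) y) ≤ Real.log Z⁻¹ := by
        rw [hlogx]; nlinarith [hQnn (y - A x)]
      rw [hLeq]; linarith
    have hlo : -(1 / 2) * q ≤ L := by
      have h2 : Real.log piy ≤ Real.log Z⁻¹ := Real.log_le_log hpiypos hpiyle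
      rw [hLeq, hlogx]; linarith
    have hqnn : 0 ≤ q := hQnn _
    have hqnnn : 0 ≤ qn := hQnn _
    have hLsq : L ^ 2 ≤ ((1 / 2) * q + -a) ^ 2 := by
      apply sq_le_sq'
      · nlinarith
      · nlinarith
    have h8 : a ^ 2 ≤ (1 / 4) * ∫ x', Q (y - A x') ^ 2 ∂μ₀ := by
      have h0 : a = -(1 / 2) * ∫ x', Q (y - A x') ∂μ₀ := by
        rw [ha, integral_const_mul]
      have h1 := aux_sq_integral_le μ₀ h_f1int h_f2int
      rw [h0]; nlinarith
    set A2 := ∫ x', Q (y - A x') ^ 2 ∂μ₀ with hA2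
    have hA2b : A2 ≤ 12 * q ^ 2 + 48 * Q (A x) ^ 2 + 48 * CG := by
      have hstep : ∀ x', Q (y - A x') ^ 2
          ≤ 12 * q ^ 2 + 48 * Q (A x) ^ 2 + 48 * Q (A x') ^ 2 := by
        intro x'
        have he1 : y - A x' = (y - A x) - (A x' - A x) := by abel
        have h1 : Q (y - A x') ≤ 2 * q + 2 * Q (A x' - A x) := by
          rw [he1]; exact hQsub _ _
        have h2 : Q (A x' - A x) ≤ 2 * Q (A x') + 2 * Q (A x) := hQsub _ _
        have h3 : Q (y - A x') ≤ 2 * q + 4 * Q (A x') + 4 * Q (A x) := by linarith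
        have h4 : Q (y - A x') * Q (y - A x')
            ≤ (2 * q + 4 * Q (A x') + 4 * Q (A x)) * (2 * q + 4 * Q (A x') + 4 * Q (A x)) :=
          mul_le_mul h3 h3 (hQnn _) (by nlinarith [hQnn (y - A x), hQnn (A x'), hQnn (A x)])
        nlinarith [sq_nonneg (q - 2 * Q (A x')), sq_nonneg (q - 2 * Q (A x)),
          sq_nonneg (Q (A x') - Q (A x))]
      calc A2 ≤ ∫ x', (12 * q ^ 2 + 48 * Q (A x) ^ 2 + 48 * Q (A x') ^ 2) ∂μ₀ :=
            integral_mono h_f2int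
              ((integrable_const (12 * q ^ 2 + 48 * Q (A x) ^ 2)).add (hA4int.const_mul 48))
              hstep
        _ = 12 * q ^ 2 + 48 * Q (A x) ^ 2 + 48 * ∫ x', Q (A x') ^ 2 ∂μ₀ := by
            rw [integral_add (integrable_const _) (hA4int.const_mul 48), integral_const_mul,
              integral_const]
            simp
        _ ≤ 12 * q ^ 2 + 48 * Q (A x) ^ 2 + 48 * CG := by linarith [hA4]
    have hq2 : q ^ 2 ≤ 12 * qn ^ 2 + 48 * Q (B x) ^ 2 + 48 * Q (A x) ^ 2 := by
      have he1 : y - A x = (y - B x) - (A x - B x) := by abel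
      have h1 : q ≤ 2 * qn + 2 * Q (A x - B x) := by
        rw [hq, he1]; exact hQsub _ _
      have h2 : Q (A x - B x) ≤ 2 * Q (A x) + 2 * Q (B x) := hQsub _ _
      have h3 : q ≤ 2 * qn + 4 * Q (A x) + 4 * Q (B x) := by linarith
      have h4 : q * q ≤ (2 * qn + 4 * Q (A x) + 4 * Q (B x))
          * (2 * qn + 4 * Q (A x) + 4 * Q (B x)) :=
        mul_le_mul h3 h3 hqnn (by nlinarith [hQnn (A x), hQnn (B x)])
      nlinarith [sq_nonneg (qn - 2 * Q (A x)), sq_nonneg (qn - 2 * Q (B x)),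
        sq_nonneg (Q (A x) - Q (B x))]
    have hB1 : L ^ 2 ≤ 7 * q ^ 2 + (24 * Q (A x) ^ 2 + 24 * CG) :=
      aux_arith1 hLsq h8 hA2b
    have hB2 : L ^ 2 ≤ 84 * qn ^ 2 + (336 * Q (B x) ^ 2 + 360 * Q (A x) ^ 2 + 24 * CG) :=
      aux_arith2 hB1 hq2
    have hm1 := mul_le_mul_of_nonneg_right hB1 (hgpos (A x) y).le
    have hm2 := mul_le_mul_of_nonneg_right hB2 (hgpos (B x) y).le
    calc L ^ 2 * (gaussDensity p Γ (A x) y + gaussDensity p Γ (B x) y)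
        = L ^ 2 * gaussDensity p Γ (A x) y + L ^ 2 * gaussDensity p Γ (B x) y := by ring
      _ ≤ g x y := by
          rw [hgdef2]
          exact add_le_add hm1 hm2
  -- Step E : assembling everything
  have hFnn : ∀ y, 0 ≤ ∫ x,
      (Real.log (gaussDensity p Γ (A x) y / ∫ x', gaussDensity p Γ (A x') y ∂μ₀)) ^ 2
        * (gaussDensity p Γ (A x) y + gaussDensity p Γ (B x) y) ∂μ₀ := by
    intro y
    apply integral_nonneg
    intro x
    exact mul_nonneg (sq_nonneg _) (add_pos (hgpos _ _) (hgpos _ _)).le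
  calc (∫ y, (∫ x,
          (Real.log (gaussDensity p Γ (A x) y / ∫ x', gaussDensity p Γ (A x') y ∂μ₀)) ^ 2
            * (gaussDensity p Γ (A x) y + gaussDensity p Γ (B x) y) ∂μ₀))
      ≤ ∫ y, ∫ x, g x y ∂μ₀ := by
        apply integral_mono_of_nonneg (Filter.Eventually.of_forall fun y => hFnn y)
          hprod.integral_prod_right
        refine Filter.Eventually.of_forall fun y => ?_
        apply integral_mono_of_nonneg
          (Filter.Eventually.of_forall fun x =>
            mul_nonneg (sq_nonneg _) (add_pos (hgpos _ _) (hgpos _ _)).le)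
          (hxint y) (Filter.Eventually.of_forall fun x => hptw x y)
    _ = ∫ x, (∫ y, g x y) ∂μ₀ := (integral_integral_swap (f := g) hprod).symm
    _ = ∫ x, ((7 * c + (24 * Q (A x) ^ 2 + 24 * CG) * I)
          + (84 * c + (336 * Q (B x) ^ 2 + 360 * Q (A x) ^ 2 + 24 * CG) * I)) ∂μ₀ := by
        exact integral_congr_ae (Filter.Eventually.of_forall fun x => hyval x)
    _ ≤ 91 * c + 768 * I * CG := by
        have he : (fun x => (7 * c + (24 * Q (A x) ^ 2 + 24 * CG) * I)
            + (84 * c + (336 * Q (B x) ^ 2 + 360 * Q (A x) ^ 2 + 24 * CG) * I))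
            = fun x => (91 * c + 48 * CG * I)
              + (384 * I * Q (A x) ^ 2 + 336 * I * Q (B x) ^ 2) := by
          funext x; ring
        have ha1 : Integrable (fun x => 384 * I * Q (A x) ^ 2 + 336 * I * Q (B x) ^ 2) μ₀ :=
          (hA4int.const_mul _).add (hB4int.const_mul _)
        have ha2 : Integrable (fun x => 384 * I * Q (A x) ^ 2) μ₀ := hA4int.const_mul _
        have ha3 : Integrable (fun x => 336 * I * Q (B x) ^ 2) μ₀ := hB4int.const_mul _
        rw [he, integral_add (integrable_const _) ha1, integral_add ha2 ha3,
          integral_const_mul, integral_const_mul, integral_const]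
        simp only [measure_univ, probReal_univ, ENNReal.toReal_one, smul_eq_mul, one_mul]
        have h1 : 384 * I * ∫ x, Q (A x) ^ 2 ∂μ₀ ≤ 384 * I * CG :=
          mul_le_mul_of_nonneg_left hA4 (by positivity)
        have h2 : 336 * I * ∫ x, Q (B x) ^ 2 ∂μ₀ ≤ 336 * I * CG :=
          mul_le_mul_of_nonneg_left hB4 (by positivity)
        linarith
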